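/- Let S, I : [0, ∞) → ℝ be differentiable functions solving the planar SIR system with initial values S(0) > 0 and I(0) > 0. Then S(t) > 0 and I(t) > 0 for all t ≥ 0; that is, the open positive quadrant is positively invariant. -/

import Mathlib

/-- For a solution of the planar SIR system
`Ṡ = A − βSI − μS`, `İ = βSI − (q+μ)I` (positive parameters) with `S(0) > 0`, `I(0) > 0`,
we have `S(t) > 0` and `I(t) > 0` for all `t ≥ 0`: the open positive quadrant is
positively invariant. -/
theorem sir_positive_invariance (A β μ q : ℝ)
    (hA : 0 < A) (hβ : 0 < β) (hμ : 0 < μ) (hq : 0 < q)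
    (S I : ℝ → ℝ)
    (hS : ∀ t ≥ (0 : ℝ), HasDerivAt S (A - β * S t * I t - μ * S t) t)
    (hI : ∀ t ≥ (0 : ℝ), HasDerivAt I (β * S t * I t - (q + μ) * I t) t)
    (hS0 : 0 < S 0) (hI0 : 0 < I 0) :
    ∀ t ≥ (0 : ℝ), 0 < S t ∧ 0 < I t := by
  -- continuity of S and I on [0, ∞)
  have hScont : ∀ t ≥ (0:ℝ), ContinuousAt S t := fun t ht => (hS t ht).continuousAt
  have hIcont : ∀ t ≥ (0:ℝ), ContinuousAt I t := fun t ht => (hI t ht).continuousAt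
  -- continuous extensions of the coefficient functions
  set c : ℝ → ℝ := fun t => β * S (max t 0) - (q + μ) with hc_def
  set d : ℝ → ℝ := fun t => β * I (max t 0) + μ with hd_def
  have hmax : Continuous fun t : ℝ => max t 0 := continuous_id.max continuous_const
  have hSmax : Continuous fun t : ℝ => S (max t 0) :=
    (continuousOn_of_forall_continuousAt (fun x hx => hScont x hx)).comp_continuous
      hmax (fun x => le_max_right x 0)
  have hImax : Continuous fun t : ℝ => I (max t 0) :=
    (continuousOn_of_forall_continuousAt (fun x hx => hIcont x hx)).comp_continuous
      hmax (fun x => le_max_right x 0)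
  have hc : Continuous c := (continuous_const.mul hSmax).sub continuous_const
  have hd : Continuous d := (continuous_const.mul hImax).add continuous_const
  set F : ℝ → ℝ := fun t => ∫ x in (0:ℝ)..t, c x with hF_def
  set G : ℝ → ℝ := fun t => ∫ x in (0:ℝ)..t, d x with hG_def
  have hF : ∀ t : ℝ, HasDerivAt F (c t) t := fun t =>
    (hc.integral_hasStrictDerivAt 0 t).hasDerivAt
  have hG : ∀ t : ℝ, HasDerivAt G (d t) t := fun t =>
    (hd.integral_hasStrictDerivAt 0 t).hasDerivAt
  -- positivity of I : integrating factor exp(-F)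
  have hIpos : ∀ t ≥ (0:ℝ), 0 < I t := by
    intro t ht
    set g : ℝ → ℝ := fun u => I u * Real.exp (-F u) with hg_def
    have hg : ∀ u ≥ (0:ℝ), HasDerivAt g 0 u := by
      intro u hu
      have h1 : HasDerivAt (fun v => Real.exp (-F v)) (Real.exp (-F u) * (-(c u))) u :=
        ((hF u).neg).exp
      have h2 := (hI u hu).mul h1
      have hcu : c u = β * S u - (q + μ) := by
        simp [hc_def, max_eq_left hu]
      convert h2 using 1
      case e'_4 => rfl
      case e'_5 => rfl
      case e'_8 => rfl
      rw [hcu]; ring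
    have hconst : ∀ x ∈ Set.Icc (0:ℝ) t, g x = g 0 := by
      apply constant_of_has_deriv_right_zero
      · intro x hx
        exact ((hg x hx.1).continuousAt).continuousWithinAt
      · intro x hx
        exact (hg x hx.1).hasDerivWithinAt
    have h0 : g t = g 0 := hconst t ⟨ht, le_rfl⟩
    have hg0 : g 0 = I 0 * Real.exp (-F 0) := rfl
    have hexp : 0 < Real.exp (-F t) := Real.exp_pos _
    have hexp0 : 0 < Real.exp (-F 0) := Real.exp_pos _
    have hgt : 0 < I t * Real.exp (-F t) := by
      rw [show I t * Real.exp (-F t) = g t from rfl, h0, hg0]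
      positivity
    nlinarith
  -- positivity of S : integrating factor exp(G)
  have hSpos : ∀ t ≥ (0:ℝ), 0 < S t := by
    intro t ht
    rcases eq_or_lt_of_le ht with h | h
    · rwa [← h]
    set h' : ℝ → ℝ := fun u => S u * Real.exp (G u) with hh_def
    have hh : ∀ u ≥ (0:ℝ), HasDerivAt h' (A * Real.exp (G u)) u := by
      intro u hu
      have h1 : HasDerivAt (fun v => Real.exp (G v)) (Real.exp (G u) * d u) u :=
        (hG u).exp
      have h2 := (hS u hu).mul h1
      have hdu : d u = β * I u + μ := by
        simp [hd_def, max_eq_left hu]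
      convert h2 using 1
      case e'_4 => rfl
      case e'_5 => rfl
      case e'_8 => rfl
      rw [hdu]; ring
    have hmono : StrictMonoOn h' (Set.Icc (0:ℝ) t) := by
      apply strictMonoOn_of_deriv_pos (convex_Icc 0 t)
      · intro x hx
        exact ((hh x hx.1).continuousAt).continuousWithinAt
      · intro x hx
        rw [interior_Icc] at hx
        rw [(hh x hx.1.le).deriv]
        positivity
    have hlt : h' 0 < h' t := hmono ⟨le_rfl, ht⟩ ⟨ht, le_rfl⟩ h
    have hexp : 0 < Real.exp (G t) := Real.exp_pos _
    have hexp0 : 0 < Real.exp (G 0) := Real.exp_pos _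
    have : 0 < S t * Real.exp (G t) := by
      calc (0:ℝ) < S 0 * Real.exp (G 0) := by positivity
        _ < S t * Real.exp (G t) := hlt
    nlinarith
  exact fun t ht => ⟨hSpos t ht, hIpos t ht⟩
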